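/- With f_ν as above, for all distinct x, y ∈ Ω: |f_ν(x) − f_ν(y)| ≥ ∫_{π[x,y]} sin α(x−y, H) dν(H). -/

import Mathlib

open MeasureTheory Set

noncomputable section

/-- Euclidean space `ℝⁿ`. -/
abbrev Euc (n : ℕ) := EuclideanSpace ℝ (Fin n)

/-- The space of affine hyperplanes in `ℝⁿ`, encoded as pairs `(v, c)` with `‖v‖ = 1`,
representing the hyperplane `{x : ⟪x, v⟫ = c}`. -/
abbrev Hyp (n : ℕ) := {p : Euc n × ℝ // ‖p.1‖ = 1}

/-- The hyperplane determined by `H`, as a subset of `ℝⁿ`. -/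
def hset {n : ℕ} (H : Hyp n) : Set (Euc n) := {x | (inner ℝ x H.1.1 : ℝ) = H.1.2}

/-- `meets A = π A`: the set of hyperplanes intersecting `A`. -/
def meets {n : ℕ} (A : Set (Euc n)) : Set (Hyp n) := {H | (hset H ∩ A).Nonempty}

/-- The unit normal of `H` pointing out of the halfspace containing the basepoint `o`. -/
def nrm {n : ℕ} (o : Euc n) (H : Hyp n) : Euc n :=
  if (inner ℝ o H.1.1 : ℝ) < H.1.2 then H.1.1 else -H.1.1

/-- `fnu ν o x = ∫_{π[o,x]} n(H) dν(H)`. -/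
def fnu {n : ℕ} (ν : Measure (Hyp n)) (o : Euc n) (x : Euc n) : Euc n :=
  ∫ H in meets (segment ℝ o x), nrm o H ∂ν

/-- `sin α(v, H) = |⟪v, n(H)⟫| / |v|`, the sine of the angle between the line of `v`
and the hyperplane `H`. -/
def sinA {n : ℕ} (v : Euc n) (H : Hyp n) : ℝ := |(inner ℝ v H.1.1 : ℝ)| / ‖v‖

instance hypOpens (n : ℕ) : OpensMeasurableSpace (Hyp n) :=
  Subtype.opensMeasurableSpace {p : Euc n × ℝ | ‖p.1‖ = 1}

/-- auxiliary: the affine defining function of a hyperplane evaluated at `a`. -/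
def gfn {n : ℕ} (a : Euc n) (H : Hyp n) : ℝ := (inner ℝ a H.1.1 : ℝ) - H.1.2

lemma cont_gfn {n : ℕ} (a : Euc n) : Continuous (gfn a) := by
  have h1 : Continuous (fun H : Hyp n => H.1.1) := (continuous_fst.comp continuous_subtype_val)
  have h2 : Continuous (fun H : Hyp n => H.1.2) := (continuous_snd.comp continuous_subtype_val)
  exact (continuous_const.inner h1).sub h2

lemma meas_nrm {n : ℕ} (o : Euc n) : Measurable (nrm o) := by
  unfold nrm
  have hc : MeasurableSet {H : Hyp n | (inner ℝ o H.1.1 : ℝ) < H.1.2} := by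
    have : {H : Hyp n | (inner ℝ o H.1.1 : ℝ) < H.1.2} = gfn o ⁻¹' Iio 0 := by
      ext H; simp [gfn, sub_neg]
    rw [this]; exact (cont_gfn o).measurable measurableSet_Iio
  exact Measurable.ite hc ((continuous_fst.comp continuous_subtype_val).measurable)
    ((continuous_fst.comp continuous_subtype_val).measurable.neg)

lemma norm_nrm {n : ℕ} (o : Euc n) (H : Hyp n) : ‖nrm o H‖ = 1 := by
  unfold nrm; split_ifs <;> simp [H.2]

lemma mem_meets_singleton {n : ℕ} {p : Euc n} {H : Hyp n} :
    H ∈ meets {p} ↔ gfn p H = 0 := by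
  constructor
  · rintro ⟨z, hz, rfl⟩; exact sub_eq_zero.mpr hz
  · intro h; exact ⟨p, sub_eq_zero.mp h, rfl⟩

lemma mem_meets_segment {n : ℕ} {a b : Euc n} {H : Hyp n} :
    H ∈ meets (segment ℝ a b) ↔ gfn a H * gfn b H ≤ 0 := by
  set v := H.1.1 with hv
  set c := H.1.2 with hc
  set ga : ℝ := gfn a H with hga
  set gb : ℝ := gfn b H with hgb
  have hinner : ∀ t : ℝ, (inner ℝ ((1-t) • a + t • b) v : ℝ) - c = (1-t) * ga + t * gb := by
    intro t
    rw [inner_add_left, real_inner_smul_left, real_inner_smul_left, hga, hgb]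
    unfold gfn; ring
  constructor
  · rintro ⟨z, hz, hzseg⟩
    rw [segment_eq_image] at hzseg
    obtain ⟨t, ht, rfl⟩ := hzseg
    have hzv : (inner ℝ ((1-t) • a + t • b) v : ℝ) = c := hz
    have key : (1 - t) * ga + t * gb = 0 := by rw [← hinner t, hzv]; ring
    have e : (1-t)*ga^2 + t*gb^2 + ga*gb = 0 := by linear_combination (ga + gb) * key
    nlinarith [mul_nonneg ht.1 (sq_nonneg gb),
      mul_nonneg (by linarith [ht.2] : (0:ℝ) ≤ 1 - t) (sq_nonneg ga)]
  · intro h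
    have main : ∀ t : ℝ, t ∈ Icc (0:ℝ) 1 → (1-t) * ga + t * gb = 0 →
        H ∈ meets (segment ℝ a b) := by
      intro t ht hz
      refine ⟨(1-t) • a + t • b, ?_, ?_⟩
      · show (inner ℝ ((1-t) • a + t • b) v : ℝ) = c
        have := hinner t
        rw [hz] at this
        linarith [this]
      · rw [segment_eq_image]; exact ⟨t, ht, rfl⟩
    rcases mul_nonpos_iff.mp h with ⟨h1, h2⟩ | ⟨h1, h2⟩
    · by_cases hab : ga = gb
      · exact main 0 ⟨le_refl 0, zero_le_one⟩ (by rw [le_antisymm (hab ▸ h2) h1]; ring)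
      · have hlt : gb < ga := lt_of_le_of_ne (h2.trans h1) (Ne.symm hab)
        have hne : ga - gb ≠ 0 := by intro hc; apply hab; linarith
        refine main (ga / (ga - gb)) ⟨div_nonneg h1 (by linarith), by
          rw [div_le_one (by linarith)]; linarith⟩ ?_
        field_simp
        ring
    · by_cases hab : ga = gb
      · exact main 0 ⟨le_refl 0, zero_le_one⟩ (by rw [le_antisymm h1 (hab ▸ h2)]; ring)
      · have hlt : ga < gb := lt_of_le_of_ne (h1.trans h2) hab
        have hne : gb - ga ≠ 0 := by intro hc; apply hab; linarith
        refine main ((-ga) / (gb - ga)) ⟨div_nonneg (by linarith) (by linarith), by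
          rw [div_le_one (by linarith)]; linarith⟩ ?_
        field_simp
        ring

lemma measurableSet_meets_segment {n : ℕ} (a b : Euc n) :
    MeasurableSet (meets (segment ℝ a b)) := by
  have : meets (segment ℝ a b) = (fun H : Hyp n => gfn a H * gfn b H) ⁻¹' Iic 0 := by
    ext H; simpa using mem_meets_segment
  rw [this]
  exact (((cont_gfn a).mul (cont_gfn b)).measurable) measurableSet_Iic

lemma isCompact_seg {n : ℕ} (a b : Euc n) : IsCompact (segment ℝ a b) := by
  rw [segment_eq_image]
  exact isCompact_Icc.image (by fun_prop)

set_option maxHeartbeats 1000000 in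
lemma key_signs (go gx gy : ℝ) (h0 : go ≠ 0) (h1 : gx ≠ 0) (h2 : gy ≠ 0) :
    (if gx*gy ≤ 0 then |gx - gy| else 0) =
      (if go*gx ≤ 0 then (if go < 0 then gx - gy else gy - gx) else 0)
      - (if go*gy ≤ 0 then (if go < 0 then gx - gy else gy - gx) else 0) := by
  rcases abs_cases (gx - gy) with ⟨e, he⟩ | ⟨e, he⟩ <;> rw [e] <;>
    rcases lt_or_gt_of_ne h0 with h0' | h0' <;>
    rcases lt_or_gt_of_ne h1 with h1' | h1' <;>
    rcases lt_or_gt_of_ne h2 with h2' | h2' <;>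
    split_ifs <;> nlinarith


/-- `|f_ν(x) − f_ν(y)| ≥ ∫_{π[x,y]} sin α(x−y, H) dν(H)` for distinct `x, y`. -/
theorem stmt5 (n : ℕ) (hn : 2 ≤ n) (Ω : Set (Euc n)) (hΩo : IsOpen Ω) (hΩne : Ω.Nonempty)
    (hΩc : Convex ℝ Ω) (ν : Measure (Hyp n))
    (hpt : ∀ p ∈ Ω, ν (meets {p}) = 0)
    (hseg : ∀ x ∈ Ω, ∀ y ∈ Ω, x ≠ y → 0 < ν (meets (segment ℝ x y)))
    (hcpt : ∀ K ⊆ Ω, IsCompact K → ν (meets K) < ⊤)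
    (o : Euc n) (ho : o ∈ Ω) :
    ∀ x ∈ Ω, ∀ y ∈ Ω, x ≠ y →
      (∫ H in meets (segment ℝ x y), sinA (x - y) H ∂ν) ≤ ‖fnu ν o x - fnu ν o y‖ := by
  intro x hx y hy hxy
  set A := meets (segment ℝ o x) with hA
  set B := meets (segment ℝ o y) with hB
  set C := meets (segment ℝ x y) with hC
  have hmA : MeasurableSet A := measurableSet_meets_segment o x
  have hmB : MeasurableSet B := measurableSet_meets_segment o y
  have hmC : MeasurableSet C := measurableSet_meets_segment x y
  have hfin : ∀ a ∈ Ω, ∀ b ∈ Ω, ν (meets (segment ℝ a b)) < ⊤ :=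
    fun a ha b hb => hcpt _ (hΩc.segment_subset ha hb) (isCompact_seg a b)
  -- integrability of nrm o on finite-measure sets
  have hIntN : ∀ (S : Set (Hyp n)), ν S < ⊤ → IntegrableOn (nrm o) S ν := by
    intro S hS
    refine Integrable.mono' ((integrableOn_const hS.ne) : IntegrableOn (fun _ => (1:ℝ)) S ν)
      ((meas_nrm o).aestronglyMeasurable.restrict) ?_
    filter_upwards with H
    rw [norm_nrm]
  have hIntA : IntegrableOn (nrm o) A ν := hIntN A (hfin o ho x hx)
  have hIntB : IntegrableOn (nrm o) B ν := hIntN B (hfin o ho y hy)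
  set F : Hyp n → ℝ := fun H => (inner ℝ (x - y) (nrm o H) : ℝ) with hF
  set G : Hyp n → ℝ := fun H => |(inner ℝ (x - y) H.1.1 : ℝ)| with hG
  have hIntFA : IntegrableOn F A ν := (innerSL ℝ (x - y)).integrable_comp hIntA
  have hIntFB : IntegrableOn F B ν := (innerSL ℝ (x - y)).integrable_comp hIntB
  -- a.e. statement
  have hN : ν (meets {o} ∪ meets {x} ∪ meets {y}) = 0 :=
    measure_union_null (measure_union_null (hpt o ho) (hpt x hx)) (hpt y hy)
  have hae : ∀ᵐ H ∂ν, gfn o H ≠ 0 ∧ gfn x H ≠ 0 ∧ gfn y H ≠ 0 := by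
    have := (measure_eq_zero_iff_ae_notMem).mp hN
    filter_upwards [this] with H hH
    simp only [Set.mem_union, not_or] at hH
    exact ⟨fun h => hH.1.1 (mem_meets_singleton.mpr h),
      fun h => hH.1.2 (mem_meets_singleton.mpr h),
      fun h => hH.2 (mem_meets_singleton.mpr h)⟩
  -- pointwise formulas
  have hFform : ∀ H : Hyp n, F H = if gfn o H < 0 then gfn x H - gfn y H else gfn y H - gfn x H := by
    intro H
    by_cases h : gfn o H < 0
    · have h' : (inner ℝ o H.1.1 : ℝ) < H.1.2 := by
        have := h; unfold gfn at this; linarith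
      rw [if_pos h, hF]
      show (inner ℝ (x - y) (nrm o H) : ℝ) = _
      rw [nrm, if_pos h', inner_sub_left]
      unfold gfn; ring
    · have h' : ¬ ((inner ℝ o H.1.1 : ℝ) < H.1.2) := by
        intro hc; apply h; unfold gfn; linarith
      rw [if_neg h, hF]
      show (inner ℝ (x - y) (nrm o H) : ℝ) = _
      rw [nrm, if_neg h', inner_neg_right, inner_sub_left]
      unfold gfn; ring
  have hGform : ∀ H : Hyp n, G H = |gfn x H - gfn y H| := by
    intro H
    rw [hG]
    show |(inner ℝ (x - y) H.1.1 : ℝ)| = _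
    rw [inner_sub_left]
    unfold gfn; ring_nf
  -- indicator identity a.e.
  have hind : (C.indicator G) =ᵐ[ν] fun H => A.indicator F H - B.indicator F H := by
    filter_upwards [hae] with H  hH
    obtain ⟨h0, h1, h2⟩ := hH
    classical
    have e1 : C.indicator G H = if gfn x H * gfn y H ≤ 0 then |gfn x H - gfn y H| else 0 := by
      by_cases hmem : H ∈ C
      · rw [Set.indicator_of_mem hmem, hGform H, if_pos (mem_meets_segment.mp hmem)]
      · rw [Set.indicator_of_notMem hmem, if_neg (fun hc => hmem (mem_meets_segment.mpr hc))]
    have e2 : A.indicator F H = if gfn o H * gfn x H ≤ 0 then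
        (if gfn o H < 0 then gfn x H - gfn y H else gfn y H - gfn x H) else 0 := by
      by_cases hmem : H ∈ A
      · rw [Set.indicator_of_mem hmem, hFform H, if_pos (mem_meets_segment.mp hmem)]
      · rw [Set.indicator_of_notMem hmem, if_neg (fun hc => hmem (mem_meets_segment.mpr hc))]
    have e3 : B.indicator F H = if gfn o H * gfn y H ≤ 0 then
        (if gfn o H < 0 then gfn x H - gfn y H else gfn y H - gfn x H) else 0 := by
      by_cases hmem : H ∈ B
      · rw [Set.indicator_of_mem hmem, hFform H, if_pos (mem_meets_segment.mp hmem)]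
      · rw [Set.indicator_of_notMem hmem, if_neg (fun hc => hmem (mem_meets_segment.mpr hc))]
    rw [e1, e2, e3]
    exact key_signs _ _ _ h0 h1 h2
  -- main computation
  have hintC : ∫ H in C, G H ∂ν = (∫ H in A, F H ∂ν) - ∫ H in B, F H ∂ν := by
    rw [← integral_indicator hmC, ← integral_indicator hmA, ← integral_indicator hmB,
      integral_congr_ae hind]
    exact integral_sub ((integrable_indicator_iff hmA).mpr hIntFA)
      ((integrable_indicator_iff hmB).mpr hIntFB)
  have hinner2 : (∫ H in A, F H ∂ν) - ∫ H in B, F H ∂ν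
      = (inner ℝ (x - y) (fnu ν o x - fnu ν o y) : ℝ) := by
    rw [inner_sub_right]
    congr 1
    · exact integral_inner hIntA (x - y)
    · exact integral_inner hIntB (x - y)
  have hCS : (inner ℝ (x - y) (fnu ν o x - fnu ν o y) : ℝ)
      ≤ ‖x - y‖ * ‖fnu ν o x - fnu ν o y‖ := real_inner_le_norm _ _
  have hs : (0:ℝ) < ‖x - y‖ := by
    rw [norm_pos_iff]; exact sub_ne_zero.mpr hxy
  have hsin : ∀ H : Hyp n, sinA (x - y) H = G H / ‖x - y‖ := fun H => rfl
  calc (∫ H in C, sinA (x - y) H ∂ν) = (∫ H in C, G H ∂ν) / ‖x - y‖ := by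
        simp only [hsin]; exact integral_div _ _
    _ ≤ ‖fnu ν o x - fnu ν o y‖ := by
        rw [div_le_iff₀ hs, hintC, hinner2]
        rw [mul_comm] at hCS
        exact hCS
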